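/- arXiv:2010.03111 — 4 statements merged into one kernel-verified Lean document; each statement's English description precedes it below -/
import Mathlib

section
/- Let d, n be positive integers, X = [x_1, ..., x_n] with x_i ∈ ℝ^d, λ > 0, and y ∈ {-1,1}^n with y_i = -1 for some i and y_j = 1 for some j. Then the function h(β₀, β) = [∏_{i=1}^n exp(-V(y_i(β₀ + x_iᵀβ)))] · exp(-(λn/2)‖β‖₂²) is integrable over (β₀, β) ∈ ℝ × ℝ^d; hence, after normalization, it defines a proper probability density function (the Bayesian DWD posterior is proper). -/
open MeasureTheory
open scoped RealInnerProductSpace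

/-- The DWD loss function. -/
noncomputable def V (u : ℝ) : ℝ := if u ≤ 1/2 then 1 - u else 1/(4*u)

lemma V_nonneg (u : ℝ) : 0 ≤ V u := by
  unfold V; split
  · linarith
  · rename_i h; push_neg at h; positivity

lemma neg_V_le (u : ℝ) : -V u ≤ u - 1 := by
  unfold V; split
  · linarith
  · rename_i h
    push_neg at h
    have hu : 0 < u := by linarith
    have h1 : 0 ≤ (2*u - 1)^2 / (4*u) := by positivity
    have h2 : (2*u-1)^2/(4*u) = u - 1 + 1/(4*u) := by field_simp; ring
    linarith

lemma measurable_V : Measurable V := by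
  unfold V
  exact Measurable.ite (measurableSet_le measurable_id measurable_const)
    (by fun_prop) (by fun_prop)

lemma my_integrable_exp_neg_abs : Integrable (fun t : ℝ => Real.exp (-|t|)) := by
  have h1 : IntegrableOn (fun t : ℝ => Real.exp (-|t|)) (Set.Iic 0) := by
    refine (integrableOn_exp_Iic 0).congr_fun (fun t ht => ?_) measurableSet_Iic
    simp only [Set.mem_Iic] at ht
    rw [abs_of_nonpos ht, neg_neg]
  have h2 : IntegrableOn (fun t : ℝ => Real.exp (-|t|)) (Set.Ioi 0) := by
    refine ((exp_neg_integrableOn_Ioi 0 one_pos)).congr_fun (fun t ht => ?_) measurableSet_Ioi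
    simp only [Set.mem_Ioi] at ht
    rw [abs_of_pos ht]; ring_nf
  have := h1.union h2
  rwa [Set.Iic_union_Ioi, integrableOn_univ] at this

lemma my_integrable_gauss (d : ℕ) (κ : ℝ) (hκ : 0 < κ) :
    Integrable (fun v : EuclideanSpace ℝ (Fin d) => Real.exp (-κ * ‖v‖^2)) := by
  have h : Integrable (fun v : EuclideanSpace ℝ (Fin d) =>
      Complex.exp (-(κ:ℂ) * ‖v‖^2 + 0 * ⟪(0 : EuclideanSpace ℝ (Fin d)), v⟫)) :=
    GaussianFourier.integrable_cexp_neg_mul_sq_norm_add (by simpa using hκ) 0 0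
  refine h.norm.congr (Filter.Eventually.of_forall fun v => ?_)
  simp only [Complex.norm_exp]
  norm_num
  left
  norm_cast

lemma my_integrable_gauss_lin (d : ℕ) (κ C : ℝ) (hκ : 0 < κ) :
    Integrable (fun v : EuclideanSpace ℝ (Fin d) =>
      Real.exp (C * ‖v‖) * Real.exp (-κ * ‖v‖^2)) := by
  have hbase := (my_integrable_gauss d (κ/2) (by linarith)).const_mul (Real.exp (C^2/(2*κ)))
  refine hbase.mono' ?_ (Filter.Eventually.of_forall fun v => ?_)
  · apply Measurable.aestronglyMeasurable
    fun_prop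
  · rw [Real.norm_of_nonneg (by positivity), ← Real.exp_add, ← Real.exp_add]
    apply Real.exp_le_exp.mpr
    have hid : (C - κ*‖v‖)^2/(2*κ) = C^2/(2*κ) - C*‖v‖ + κ/2*‖v‖^2 := by
      field_simp; ring
    have hnn : 0 ≤ (C - κ*‖v‖)^2/(2*κ) := by positivity
    linarith

/-- the unnormalized Bayesian DWD posterior density
`h(β₀, β) = [∏ᵢ exp(-V(yᵢ(β₀ + xᵢᵀβ)))] · exp(-(λn/2)‖β‖₂²)` is integrable over
`(β₀, β) ∈ ℝ × ℝ^d`, hence defines a proper probability density after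
normalization. -/
theorem dwd_posterior_proper (d n : ℕ) (hd : 0 < d) (hn : 0 < n)
    (x : Fin n → EuclideanSpace ℝ (Fin d)) (lam : ℝ) (hlam : 0 < lam)
    (y : Fin n → ℝ) (hy : ∀ i, y i = -1 ∨ y i = 1)
    (hneg : ∃ i, y i = -1) (hpos : ∃ j, y j = 1) :
    Integrable (fun p : ℝ × EuclideanSpace ℝ (Fin d) =>
      (∏ i, Real.exp (-V (y i * (p.1 + ⟪x i, p.2⟫)))) *
        Real.exp (-(lam * n / 2) * ‖p.2‖^2)) := by
  obtain ⟨i0, hi0⟩ := hneg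
  obtain ⟨j0, hj0⟩ := hpos
  have hij : i0 ≠ j0 := by intro h; rw [h, hj0] at hi0; norm_num at hi0
  set κ : ℝ := lam * n / 2 with hκdef
  have hκ : 0 < κ := by
    have : (0:ℝ) < n := by exact_mod_cast hn
    positivity
  set C : ℝ := ‖x i0‖ + ‖x j0‖ with hCdef
  -- the dominating function
  have hg : Integrable (fun p : ℝ × EuclideanSpace ℝ (Fin d) =>
      Real.exp (-|p.1|) * (Real.exp (C * ‖p.2‖) * Real.exp (-κ * ‖p.2‖^2))) := by
    have := my_integrable_exp_neg_abs.mul_prod (my_integrable_gauss_lin d κ C hκ)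
    rwa [← MeasureTheory.Measure.volume_eq_prod] at this
  refine hg.mono' ?_ (Filter.Eventually.of_forall fun p => ?_)
  · apply Measurable.aestronglyMeasurable
    apply Measurable.mul
    · apply Finset.measurable_prod
      intro i _
      apply Measurable.exp
      apply Measurable.neg
      apply measurable_V.comp
      apply Measurable.const_mul
      apply Measurable.add measurable_fst
      exact (Continuous.inner continuous_const continuous_snd).measurable
    · fun_prop
  · obtain ⟨β₀, β⟩ := p
    simp only
    set f : Fin n → ℝ := fun i => Real.exp (-V (y i * (β₀ + ⟪x i, β⟫))) with hf
    have hf_nonneg : ∀ i, 0 ≤ f i := fun i => (Real.exp_pos _).le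
    have hf_le_one : ∀ i, f i ≤ 1 := fun i => by
      rw [hf, ← Real.exp_zero]
      exact Real.exp_le_exp.mpr (neg_nonpos.mpr (V_nonneg _))
    have hprod : (∏ i, f i) ≤ f i0 * f j0 := by
      have hsub : ({i0, j0} : Finset (Fin n)) ⊆ Finset.univ := Finset.subset_univ _
      calc ∏ i, f i = (∏ i ∈ Finset.univ \ {i0, j0}, f i) * ∏ i ∈ {i0, j0}, f i :=
            (Finset.prod_sdiff hsub).symm
        _ ≤ 1 * ∏ i ∈ {i0, j0}, f i := by
            apply mul_le_mul_of_nonneg_right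
            · exact Finset.prod_le_one (fun i _ => hf_nonneg i) (fun i _ => hf_le_one i)
            · exact Finset.prod_nonneg fun i _ => hf_nonneg i
        _ = f i0 * f j0 := by rw [one_mul, Finset.prod_pair hij]
    have ha : |⟪x j0, β⟫| ≤ C * ‖β‖ := by
      calc |⟪x j0, β⟫| ≤ ‖x j0‖ * ‖β‖ := abs_real_inner_le_norm _ _
        _ ≤ C * ‖β‖ := by
            apply mul_le_mul_of_nonneg_right _ (norm_nonneg β)
            rw [hCdef]; nlinarith [norm_nonneg (x i0)]
    have hb : |⟪x i0, β⟫| ≤ C * ‖β‖ := by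
      calc |⟪x i0, β⟫| ≤ ‖x i0‖ * ‖β‖ := abs_real_inner_le_norm _ _
        _ ≤ C * ‖β‖ := by
            apply mul_le_mul_of_nonneg_right _ (norm_nonneg β)
            rw [hCdef]; nlinarith [norm_nonneg (x j0)]
    have hkey : f i0 * f j0 ≤ Real.exp (-|β₀| + C * ‖β‖) := by
      rw [hf]
      simp only [hi0, hj0]
      rw [← Real.exp_add]
      apply Real.exp_le_exp.mpr
      have h1 := neg_V_le ((-1) * (β₀ + ⟪x i0, β⟫))
      have h2 := neg_V_le (1 * (β₀ + ⟪x j0, β⟫))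
      have h3 := V_nonneg ((-1) * (β₀ + ⟪x i0, β⟫))
      have h4 := V_nonneg (1 * (β₀ + ⟪x j0, β⟫))
      rcases le_or_gt 0 β₀ with hβ | hβ
      · rw [abs_of_nonneg hβ]
        have := neg_abs_le (⟪x i0, β⟫)
        have := le_abs_self (⟪x i0, β⟫)
        nlinarith
      · rw [abs_of_neg hβ]
        have := neg_abs_le (⟪x j0, β⟫)
        have := le_abs_self (⟪x j0, β⟫)
        nlinarith
    have hpos' : (0:ℝ) ≤ (∏ i, f i) * Real.exp (-κ * ‖β‖^2) :=
      mul_nonneg (Finset.prod_nonneg fun i _ => hf_nonneg i) (Real.exp_pos _).le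
    rw [Real.norm_of_nonneg hpos']
    calc (∏ i, f i) * Real.exp (-κ * ‖β‖^2)
        ≤ Real.exp (-|β₀| + C * ‖β‖) * Real.exp (-κ * ‖β‖^2) := by
          apply mul_le_mul_of_nonneg_right _ (Real.exp_pos _).le
          exact hprod.trans hkey
      _ = Real.exp (-|β₀|) * (Real.exp (C * ‖β‖) * Real.exp (-κ * ‖β‖^2)) := by
          rw [Real.exp_add]; ring
end

section
/- The function V is convex on ℝ. -/
lemma V_support_line (z : ℝ) :
    ∃ c d : ℝ, (∀ u, c + d * u ≤ V u) ∧ c + d * z = V z := by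
  by_cases hz : z ≤ 1/2
  · refine ⟨1, -1, fun u => ?_, by simp only [V, if_pos hz]; ring⟩
    by_cases hu : u ≤ 1/2
    · simp only [V, if_pos hu]; linarith
    · push_neg at hu
      simp only [V, if_neg (not_le.2 hu)]
      rw [le_div_iff₀ (by linarith)]
      nlinarith [sq_nonneg (2*u - 1)]
  · push_neg at hz
    have hz0 : (0:ℝ) < z := by linarith
    refine ⟨1/(2*z), -(1/(4*z^2)), fun u => ?_, ?_⟩
    · have key : 1/(2*z) + -(1/(4*z^2)) * u = (2*z - u)/(4*z^2) := by
        field_simp; ring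
      rw [key]
      by_cases hu : u ≤ 1/2
      · simp only [V, if_pos hu]
        rw [div_le_iff₀ (by positivity)]
        nlinarith [sq_nonneg (2*z - 1),
          mul_nonneg (by linarith : (0:ℝ) ≤ 1/2 - u) (by nlinarith : (0:ℝ) ≤ 4*z^2 - 1)]
      · push_neg at hu
        have hu0 : (0:ℝ) < u := by linarith
        simp only [V, if_neg (not_le.2 hu)]
        rw [div_le_div_iff₀ (by positivity) (by positivity)]
        nlinarith [sq_nonneg (z - u)]
    · simp only [V, if_neg (not_le.2 hz)]
      field_simp
      ring

/-- `V` is convex on `ℝ`. -/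
theorem dwd_loss_convex : ConvexOn ℝ Set.univ V := by
  refine ⟨convex_univ, fun x _ y _ a b ha hb hab => ?_⟩
  obtain ⟨c, d, hle, heq⟩ := V_support_line (a * x + b * y)
  calc V (a • x + b • y) = c + d * (a * x + b * y) := by
        simp only [smul_eq_mul]; rw [← heq]
    _ = a * (c + d * x) + b * (c + d * y) := by linear_combination (-c) * hab
    _ ≤ a * V x + b * V y := by
        gcongr <;> [exact hle x; exact hle y]
end

section
/- The Bayesian DWD link function σ(u) = exp(-V(u)) / (exp(-V(u)) + exp(-V(-u))) is strictly increasing on ℝ. -/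
lemma V_strictAnti : StrictAnti V := by
  intro a b hab
  unfold V
  split_ifs with h1 h2 h2
  · linarith
  · exact absurd (hab.trans_le h1).le h2
  · have hb : (1:ℝ)/2 < b := lt_of_not_ge h1
    have hbpos : (0:ℝ) < 4 * b := by linarith
    have : 1/(4*b) < 1/2 := by
      rw [div_lt_div_iff₀ hbpos (by norm_num)]
      linarith
    linarith
  · have ha : (1:ℝ)/2 < a := lt_of_not_ge h2
    have : (0:ℝ) < 4 * a := by linarith
    apply div_lt_div_of_pos_left (by norm_num) this
    linarith

/-- The Bayesian DWD link function (class-1 probability of a score `u` under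
equal class proportions). -/
noncomputable def dwdLink (u : ℝ) : ℝ :=
  Real.exp (-V u) / (Real.exp (-V u) + Real.exp (-V (-u)))

/-- the Bayesian DWD link function is strictly increasing on `ℝ`. -/
theorem dwdLink_strictMono : StrictMono dwdLink := by
  intro a b hab
  unfold dwdLink
  have h1 := V_strictAnti hab
  have h2 := V_strictAnti (neg_lt_neg hab)
  have pa : (0:ℝ) < Real.exp (-V a) + Real.exp (-V (-a)) :=
    by positivity
  have pb : (0:ℝ) < Real.exp (-V b) + Real.exp (-V (-b)) :=
    by positivity
  rw [div_lt_div_iff₀ pa pb]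
  have key : Real.exp (-V a) * Real.exp (-V (-b)) <
      Real.exp (-V b) * Real.exp (-V (-a)) := by
    rw [← Real.exp_add, ← Real.exp_add, Real.exp_lt_exp]
    linarith
  ring_nf
  nlinarith [key]
end

section
/- The prior score term f(u) = exp(-V(u)) + exp(-V(-u)) is an even function of u, is strictly increasing on [0, ∞), and hence attains its unique global minimum at u = 0; that is, the prior gives higher density to directions whose scores are not concentrated near 0. -/
open Real

/-- The prior score term `f(u) = exp(-V u) + exp(-V (-u))`. -/
noncomputable def priorTerm (u : ℝ) : ℝ := Real.exp (-V u) + Real.exp (-V (-u))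

lemma V_of_le {u : ℝ} (h : u ≤ 1/2) : V u = 1 - u := if_pos h

lemma V_of_gt {u : ℝ} (h : 1/2 < u) : V u = 1/(4*u) := if_neg (not_le.mpr h)

lemma priorTerm_eq_left {u : ℝ} (h0 : 0 ≤ u) (h : u ≤ 1/2) :
    priorTerm u = Real.exp (u - 1) + Real.exp (-1 - u) := by
  have h1 : V u = 1 - u := V_of_le h
  have h2 : V (-u) = 1 + u := by rw [V_of_le (by linarith)]; ring
  rw [priorTerm, h1, h2]
  ring_nf

lemma priorTerm_eq_right {u : ℝ} (h : 1/2 ≤ u) :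
    priorTerm u = Real.exp (-(1/(4*u))) + Real.exp (-1 - u) := by
  have h2 : V (-u) = 1 + u := by rw [V_of_le (by linarith)]; ring
  have h1 : V u = 1/(4*u) := by
    rcases eq_or_lt_of_le h with h' | h'
    · rw [V_of_le h'.symm.le, ← h']; norm_num
    · exact V_of_gt h'
  rw [priorTerm, h1, h2]
  ring_nf

lemma polyaux (u : ℝ) (hu : 1/2 < u) :
    16*u^3 < (1 + (1+u) + (1+u)^2/2 + (1+u)^3/6 + (1+u)^4/24 + (1+u)^5/120
      + (1+u)^6/720 + (1+u)^7/5040) * (4*u-1) := by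
  obtain ⟨v, hv, rfl⟩ : ∃ v : ℝ, 0 < v ∧ u = v + 1/2 := ⟨u - 1/2, by linarith, by ring⟩
  nlinarith [sq_nonneg (v-1), sq_nonneg (v*(v-1)), sq_nonneg (v*(v-2)), sq_nonneg (v^2-2*v),
    sq_nonneg (v^2-1), hv.le, pow_pos hv 5, pow_pos hv 6, pow_pos hv 7, pow_pos hv 8,
    sq_nonneg (v^2-2), sq_nonneg (v*(v-1)*(v+1))]

lemma key_exp (u : ℝ) (hu : 1/2 < u) :
    Real.exp (-1 - u) < Real.exp (-(1/(4*u))) * (1/(4*u^2)) := by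
  have hu0 : 0 < u := by linarith
  have hS : (1 + (1+u) + (1+u)^2/2 + (1+u)^3/6 + (1+u)^4/24 + (1+u)^5/120
      + (1+u)^6/720 + (1+u)^7/5040) ≤ Real.exp (1 + u) := by
    have h := Real.sum_le_exp_of_nonneg (x := 1 + u) (by linarith) 8
    calc (1 + (1+u) + (1+u)^2/2 + (1+u)^3/6 + (1+u)^4/24 + (1+u)^5/120
        + (1+u)^6/720 + (1+u)^7/5040)
        = ∑ i ∈ Finset.range 8, (1+u)^i / i.factorial := by
          simp [Finset.sum_range_succ, Nat.factorial]
      _ ≤ Real.exp (1 + u) := h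
  have h1 : (1 : ℝ) - 1/(4*u) ≤ Real.exp (-(1/(4*u))) := by
    have := Real.add_one_le_exp (-(1/(4*u)))
    linarith
  have hkey : 16*u^3 < Real.exp (1 + u) * (4*u - 1) := by
    have hp := polyaux u hu
    nlinarith [hp, hS]
  have hE : Real.exp (-1 - u) = (Real.exp (1 + u))⁻¹ := by
    rw [← Real.exp_neg]; ring_nf
  have hEpos : 0 < Real.exp (1 + u) := Real.exp_pos _
  have h2 : Real.exp (-1 - u) < (4*u - 1) / (16*u^3) := by
    rw [hE, inv_eq_one_div, div_lt_div_iff₀ hEpos (by positivity)]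
    nlinarith [hkey]
  have h3 : (4*u - 1) / (16*u^3) ≤ Real.exp (-(1/(4*u))) * (1/(4*u^2)) := by
    have : (4*u - 1) / (16*u^3) = (1 - 1/(4*u)) * (1/(4*u^2)) := by
      have hu' : u ≠ 0 := ne_of_gt hu0
      field_simp
      ring
    rw [this]
    have : (0:ℝ) < 1/(4*u^2) := by positivity
    nlinarith
  linarith

/-- The smooth model of `priorTerm` on `[1/2, ∞)`. -/
noncomputable def gAux (u : ℝ) : ℝ := Real.exp (-(1/(4*u))) + Real.exp (-1 - u)

lemma gAux_hasDerivAt {u : ℝ} (hu : 0 < u) :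
    HasDerivAt gAux (Real.exp (-(1/(4*u))) * (1/(4*u^2)) + Real.exp (-1 - u) * (-1)) u := by
  have hne : u ≠ 0 := ne_of_gt hu
  have h1 : HasDerivAt (fun x : ℝ => -(1/(4*x))) (1/(4*u^2)) u := by
    have h := (hasDerivAt_inv hne).const_mul (-(1/4 : ℝ))
    have heq : (fun x : ℝ => -(1/4 : ℝ) * x⁻¹) = fun x : ℝ => -(1/(4*x)) := by
      funext x
      rw [one_div (4*x), mul_inv]
      ring
    rw [heq] at h
    exact h.congr_deriv (by ring)
  have h2 : HasDerivAt (fun x : ℝ => -1 - x) (-1) u := by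
    simpa using (hasDerivAt_id u).const_sub (-1 : ℝ)
  exact (h1.exp).add (by simpa using h2.exp)

lemma gAux_strictMonoOn : StrictMonoOn gAux (Set.Ici (1/2 : ℝ)) := by
  apply strictMonoOn_of_deriv_pos (convex_Ici _)
  · apply ContinuousOn.add
    · apply Real.continuous_exp.comp_continuousOn
      apply ContinuousOn.neg
      apply ContinuousOn.div continuousOn_const (by fun_prop)
      intro x hx
      have : (1/2 : ℝ) ≤ x := hx
      positivity
    · fun_prop
  · intro x hx
    rw [interior_Ici] at hx
    have hx' : (1/2 : ℝ) < x := hx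
    have hx0 : 0 < x := by linarith
    rw [(gAux_hasDerivAt hx0).deriv]
    have := key_exp x hx'
    nlinarith [this]

lemma priorTerm_strictMonoOn : StrictMonoOn priorTerm (Set.Ici (0 : ℝ)) := by
  have piece1 : ∀ a b : ℝ, 0 ≤ a → a < b → b ≤ 1/2 → priorTerm a < priorTerm b := by
    intro a b ha hab hb
    rw [priorTerm_eq_left ha (by linarith), priorTerm_eq_left (by linarith) hb]
    have h1 : Real.exp (-1 - b) < Real.exp (a - 1) := Real.exp_lt_exp.mpr (by linarith)
    have h2 : (1 : ℝ) < Real.exp (b - a) := Real.one_lt_exp_iff.mpr (by linarith)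
    have e1 : Real.exp (b - 1) = Real.exp (a - 1) * Real.exp (b - a) := by
      rw [← Real.exp_add]; ring_nf
    have e2 : Real.exp (-1 - a) = Real.exp (-1 - b) * Real.exp (b - a) := by
      rw [← Real.exp_add]; ring_nf
    nlinarith [h1, h2, Real.exp_pos (b - a)]
  have piece2 : ∀ a b : ℝ, 1/2 ≤ a → a < b → priorTerm a < priorTerm b := by
    intro a b ha hab
    rw [priorTerm_eq_right ha, priorTerm_eq_right (by linarith)]
    exact gAux_strictMonoOn ha (by simp only [Set.mem_Ici]; linarith) hab
  intro a ha b hb hab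
  simp only [Set.mem_Ici] at ha hb
  rcases le_or_gt b (1/2) with h1 | h1
  · exact piece1 a b ha hab h1
  · rcases le_or_gt (1/2) a with h2 | h2
    · exact piece2 a b h2 hab
    · exact lt_trans (piece1 a (1/2) ha h2 le_rfl) (piece2 (1/2) b le_rfl h1)

/-- `f` is even, strictly increasing on `[0, ∞)`, and attains its
unique global minimum at `u = 0`. -/
theorem priorTerm_even_min :
    (∀ u : ℝ, priorTerm (-u) = priorTerm u) ∧
      StrictMonoOn priorTerm (Set.Ici 0) ∧
      ∀ u : ℝ, u ≠ 0 → priorTerm 0 < priorTerm u := by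
  have heven : ∀ u : ℝ, priorTerm (-u) = priorTerm u := by
    intro u
    simp only [priorTerm, neg_neg]
    ring
  refine ⟨heven, priorTerm_strictMonoOn, ?_⟩
  intro u hu
  rcases lt_or_gt_of_ne hu with h | h
  · rw [← heven u]
    exact priorTerm_strictMonoOn (Set.mem_Ici.mpr le_rfl)
      (Set.mem_Ici.mpr (by linarith)) (by linarith)
  · exact priorTerm_strictMonoOn (Set.mem_Ici.mpr le_rfl)
      (Set.mem_Ici.mpr (by linarith)) h
end
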